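/- The ring A = ⋃_{C>0} A_C is a discrete valuation ring: it is a local integral domain, its maximal ideal is the principal ideal t·A = {f ∈ A : f(0) = 0}, its residue field is isomorphic to ℂ via evaluation of the constant coefficient, and every nonzero f ∈ A can be written uniquely as f = t^n · u where n is the t-adic order of f and u is a unit of A. -/

import Mathlib

open scoped ENNReal

/-- The norm `‖f‖_C = ∑_{j=0}^∞ |a_j| C^j / j!` of a formal power series
`f = ∑ a_j t^j ∈ ℂ[[t]]`, valued in `[0,∞]`. -/
noncomputable def normC (C : ℝ) (f : PowerSeries ℂ) : ℝ≥0∞ :=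
  ∑' j : ℕ, (‖(PowerSeries.coeff j) f‖₊ : ℝ≥0∞) * ENNReal.ofReal (C ^ j / (j.factorial : ℝ))

/-- `A_C = {f ∈ ℂ[[t]] : ‖f‖_C < ∞}`. -/
def Asub (C : ℝ) : Set (PowerSeries ℂ) := {f | normC C f < ⊤}


/-- `A = ⋃_{C>0} A_C`. -/
def Afull : Set (PowerSeries ℂ) := {f | ∃ C > (0 : ℝ), f ∈ Asub C}

open PowerSeries

/-- Gevrey-type growth bound on coefficients. -/
def Gev (f : PowerSeries ℂ) : Prop :=
  ∃ M r : ℝ, 1 ≤ M ∧ 1 ≤ r ∧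
    ∀ j : ℕ, ‖(PowerSeries.coeff j) f‖ ≤ M * r ^ j * (j.factorial : ℝ)

lemma mem_Afull_iff_Gev (f : PowerSeries ℂ) : f ∈ Afull ↔ Gev f := by
  constructor
  · rintro ⟨C, hC, hf⟩
    have hT : normC C f ≠ ⊤ := hf.ne
    set N : ℝ := (normC C f).toReal with hN
    refine ⟨max N 1, max (1/C) 1, le_max_right _ _, le_max_right _ _, fun j => ?_⟩
    have hterm : (‖(PowerSeries.coeff j) f‖₊ : ℝ≥0∞) * ENNReal.ofReal (C ^ j / (j.factorial : ℝ))
        ≤ normC C f := ENNReal.le_tsum j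
    have hpos : (0:ℝ) < C ^ j / (j.factorial : ℝ) := by positivity
    have h1 : ENNReal.ofReal (‖(PowerSeries.coeff j) f‖ * (C ^ j / (j.factorial : ℝ)))
        ≤ normC C f := by
      rw [ENNReal.ofReal_mul (norm_nonneg _), ofReal_norm, enorm_eq_nnnorm]
      exact hterm
    have h2 : ‖(PowerSeries.coeff j) f‖ * (C ^ j / (j.factorial : ℝ)) ≤ N :=
      (ENNReal.ofReal_le_iff_le_toReal hT).mp h1
    have hNnn : 0 ≤ N := ENNReal.toReal_nonneg
    have h3 : ‖(PowerSeries.coeff j) f‖ ≤ N * (1/C) ^ j * (j.factorial : ℝ) := by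
      calc ‖(PowerSeries.coeff j) f‖
          = ‖(PowerSeries.coeff j) f‖ * (C ^ j / (j.factorial : ℝ)) *
            ((j.factorial : ℝ) / C ^ j) := by
            field_simp
        _ ≤ N * ((j.factorial : ℝ) / C ^ j) :=
            mul_le_mul_of_nonneg_right h2 (by positivity)
        _ = N * (1/C) ^ j * (j.factorial : ℝ) := by
            field_simp
            rw [mul_assoc, ← mul_pow, mul_one_div_cancel hC.ne', one_pow, mul_one]
    refine h3.trans ?_
    have h4 : (1/C) ^ j ≤ (max (1/C) 1) ^ j :=
      pow_le_pow_left₀ (by positivity) (le_max_left _ _) j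
    have h5 : N * (1/C) ^ j ≤ max N 1 * (max (1/C) 1) ^ j := by
      apply mul_le_mul (le_max_left _ _) h4 (by positivity) (by positivity)
    exact mul_le_mul_of_nonneg_right h5 (by positivity)
  · rintro ⟨M, r, hM, hr, hb⟩
    have hr0 : (0:ℝ) < r := lt_of_lt_of_le one_pos hr
    refine ⟨1/(2*r), by positivity, ?_⟩
    have key : ∀ j : ℕ, (‖(PowerSeries.coeff j) f‖₊ : ℝ≥0∞) *
        ENNReal.ofReal ((1/(2*r)) ^ j / (j.factorial : ℝ))
        ≤ ENNReal.ofReal M * (2⁻¹ : ℝ≥0∞) ^ j := by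
      intro j
      have h1 : (‖(PowerSeries.coeff j) f‖₊ : ℝ≥0∞) *
          ENNReal.ofReal ((1/(2*r)) ^ j / (j.factorial : ℝ))
          = ENNReal.ofReal (‖(PowerSeries.coeff j) f‖ * ((1/(2*r)) ^ j / (j.factorial : ℝ))) := by
        rw [ENNReal.ofReal_mul (norm_nonneg _), ofReal_norm, enorm_eq_nnnorm]
      rw [h1]
      have h2 : ‖(PowerSeries.coeff j) f‖ * ((1/(2*r)) ^ j / (j.factorial : ℝ))
          ≤ M * (1/2 : ℝ) ^ j := by
        calc ‖(PowerSeries.coeff j) f‖ * ((1/(2*r)) ^ j / (j.factorial : ℝ))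
            ≤ (M * r ^ j * (j.factorial : ℝ)) * ((1/(2*r)) ^ j / (j.factorial : ℝ)) := by
              apply mul_le_mul_of_nonneg_right (hb j) (by positivity)
          _ = M * (1/2 : ℝ) ^ j := by
              have hrne : r ≠ 0 := ne_of_gt hr0
              have hfac : (j.factorial : ℝ) ≠ 0 := by positivity
              rw [div_pow, one_pow, mul_pow]
              field_simp
              rw [← mul_pow]; norm_num
      calc ENNReal.ofReal (‖(PowerSeries.coeff j) f‖ * ((1/(2*r)) ^ j / (j.factorial : ℝ)))
          ≤ ENNReal.ofReal (M * (1/2 : ℝ) ^ j) := ENNReal.ofReal_le_ofReal h2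
        _ = ENNReal.ofReal M * ENNReal.ofReal ((1/2 : ℝ) ^ j) := by
            rw [ENNReal.ofReal_mul (by linarith)]
        _ = ENNReal.ofReal M * (2⁻¹ : ℝ≥0∞) ^ j := by
            congr 1
            rw [ENNReal.ofReal_pow (by norm_num : (0:ℝ) ≤ 1/2)]
            congr 1
            rw [show (1:ℝ)/2 = 2⁻¹ by norm_num, ENNReal.ofReal_inv_of_pos (by norm_num)]
            norm_num
    have : normC (1/(2*r)) f ≤ ENNReal.ofReal M * ∑' j : ℕ, (2⁻¹ : ℝ≥0∞) ^ j := by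
      rw [← ENNReal.tsum_mul_left]
      exact ENNReal.tsum_le_tsum key
    refine lt_of_le_of_lt this ?_
    rw [ENNReal.tsum_geometric]
    apply ENNReal.mul_lt_top ENNReal.ofReal_lt_top
    have : (1 : ℝ≥0∞) - 2⁻¹ = 2⁻¹ := by
      rw [ENNReal.sub_eq_of_eq_add (by norm_num)]
      rw [ENNReal.inv_two_add_inv_two]
    rw [this]
    simp

/-- The shift `∑ a_{j+1} t^j` of a power series. -/
noncomputable def shiftPS (f : PowerSeries ℂ) : PowerSeries ℂ :=
  PowerSeries.mk fun k => (PowerSeries.coeff (k + 1)) f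

@[simp] lemma coeff_shiftPS (f : PowerSeries ℂ) (k : ℕ) :
    (PowerSeries.coeff k) (shiftPS f) = (PowerSeries.coeff (k + 1)) f :=
  PowerSeries.coeff_mk _ _

lemma Gev_shiftPS {f : PowerSeries ℂ} (hf : Gev f) : Gev (shiftPS f) := by
  obtain ⟨M, r, hM, hr, hb⟩ := hf
  refine ⟨M * r, 2 * r, le_trans hM (le_mul_of_one_le_right (by linarith) hr), by linarith, fun j => ?_⟩
  rw [coeff_shiftPS]
  have h2 : ((j:ℝ) + 1) ≤ 2 ^ j := by
    have hj : j + 1 ≤ 2 ^ j := Nat.lt_two_pow_self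
    exact_mod_cast hj
  calc ‖(PowerSeries.coeff (j+1)) f‖ ≤ M * r ^ (j+1) * ((j+1).factorial : ℝ) := hb (j+1)
    _ = (M * r) * r ^ j * (((j:ℝ) + 1) * (j.factorial : ℝ)) := by
        rw [pow_succ, Nat.factorial_succ]
        push_cast
        ring
    _ ≤ (M * r) * r ^ j * ((2:ℝ) ^ j * (j.factorial : ℝ)) := by
        have h0 : (0:ℝ) ≤ (M * r) * r ^ j := by positivity
        apply mul_le_mul_of_nonneg_left _ h0
        apply mul_le_mul_of_nonneg_right h2 (by positivity)
    _ = (M * r) * (2 * r) ^ j * (j.factorial : ℝ) := by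
        rw [mul_pow]; ring

lemma Gev_iterate_shiftPS {f : PowerSeries ℂ} (hf : Gev f) (n : ℕ) :
    Gev (shiftPS^[n] f) := by
  induction n with
  | zero => exact hf
  | succ n ih => rw [Function.iterate_succ_apply']; exact Gev_shiftPS ih

lemma coeff_iterate_shiftPS (f : PowerSeries ℂ) (n k : ℕ) :
    (PowerSeries.coeff k) (shiftPS^[n] f) = (PowerSeries.coeff (k + n)) f := by
  induction n generalizing k with
  | zero => rfl
  | succ n ih =>
      rw [Function.iterate_succ_apply', coeff_shiftPS, ih,
        show k + 1 + n = k + (n + 1) from by omega]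

lemma Gev_inv {f : PowerSeries ℂ} (h0 : PowerSeries.constantCoeff f ≠ 0) (hf : Gev f) :
    Gev f⁻¹ := by
  obtain ⟨M, r, hM, hr, hb⟩ := hf
  have ha0 : (0:ℝ) < ‖PowerSeries.constantCoeff f‖ := norm_pos_iff.mpr h0
  set B : ℝ := ‖PowerSeries.constantCoeff f‖⁻¹ with hBdef
  have hBpos : 0 < B := by positivity
  set K : ℝ := 1 + M * B with hKdef
  have hMB : 0 < M * B := by positivity
  have hK1 : 1 < K := by simp only [hKdef]; linarith
  have hK0 : 0 < K := by linarith
  set s : ℝ := K * r with hsdef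
  have hr0 : (0:ℝ) < r := lt_of_lt_of_le one_pos hr
  have hs1 : 1 ≤ s := by
    calc (1:ℝ) ≤ r := hr
      _ = 1 * r := (one_mul r).symm
      _ ≤ K * r := by apply mul_le_mul_of_nonneg_right (le_of_lt hK1) (le_of_lt hr0)
  have hs0 : 0 < s := lt_of_lt_of_le one_pos hs1
  have key : ∀ n : ℕ, ‖(PowerSeries.coeff n) f⁻¹‖ ≤ B * s ^ n * (n.factorial : ℝ) := by
    intro n
    induction n using Nat.strong_induction_on with
    | _ n ih =>
      rcases Nat.eq_zero_or_pos n with rfl | hn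
      · rw [PowerSeries.coeff_inv, if_pos rfl, norm_inv]
        simp [hBdef]
      · have hne : n ≠ 0 := hn.ne'
        rw [PowerSeries.coeff_inv, if_neg hne]
        rw [norm_mul, norm_neg, norm_inv]
        have hsum1 : ‖∑ x ∈ Finset.HasAntidiagonal.antidiagonal n,
            if x.2 < n then (PowerSeries.coeff x.1) f * (PowerSeries.coeff x.2) f⁻¹ else 0‖
            ≤ ∑ k ∈ Finset.range (n+1),
              (if n - k < n then M * B * (n.factorial : ℝ) * r ^ n * K ^ (n - k) else 0) := by
        -- first: norm of sum ≤ sum of norms, then bound each term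
          refine le_trans (norm_sum_le _ _) ?_
          rw [Finset.Nat.sum_antidiagonal_eq_sum_range_succ_mk]
          apply Finset.sum_le_sum
          intro k hk
          rcases lt_or_ge (n - k) n with hlt | hge
          · rw [if_pos hlt, if_pos hlt, norm_mul]
            have hk1 : 1 ≤ k := by omega
            have hkn : k ≤ n := by
              simpa using Finset.mem_range_succ_iff.mp hk
            have hfac : (k.factorial : ℝ) * ((n-k).factorial : ℝ) ≤ (n.factorial : ℝ) := by
              have hd := Nat.factorial_mul_factorial_dvd_factorial_add k (n - k)
              rw [show k + (n - k) = n from by omega] at hd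
              exact_mod_cast Nat.le_of_dvd n.factorial_pos hd
            calc ‖(PowerSeries.coeff k) f‖ * ‖(PowerSeries.coeff (n-k)) f⁻¹‖
                ≤ (M * r ^ k * (k.factorial : ℝ)) * (B * s ^ (n-k) * ((n-k).factorial : ℝ)) := by
                  apply mul_le_mul (hb k) (ih (n-k) hlt) (norm_nonneg _) (by positivity)
              _ = M * B * ((k.factorial : ℝ) * ((n-k).factorial : ℝ)) * (r ^ k * s ^ (n-k)) := by
                  ring
              _ ≤ M * B * (n.factorial : ℝ) * (r ^ k * s ^ (n-k)) := by
                  apply mul_le_mul_of_nonneg_right _ (by positivity)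
                  apply mul_le_mul_of_nonneg_left hfac (by positivity)
              _ = M * B * (n.factorial : ℝ) * r ^ n * K ^ (n-k) := by
                  rw [hsdef, mul_pow, show r ^ k * (K ^ (n-k) * r ^ (n-k)) =
                    r ^ (k + (n-k)) * K ^ (n-k) from by rw [pow_add]; ring,
                    show k + (n - k) = n from by omega]
                  ring
          · rw [if_neg (not_lt.mpr hge), if_neg (not_lt.mpr hge), norm_zero]
        have hsum2 : ∑ k ∈ Finset.range (n+1),
            (if n - k < n then M * B * (n.factorial : ℝ) * r ^ n * K ^ (n - k) else 0)
            = M * B * (n.factorial : ℝ) * r ^ n * ∑ j ∈ Finset.range n, K ^ j := by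
          rw [Finset.sum_range_succ']
          rw [if_neg (by omega : ¬ (n - 0 < n))]
          rw [add_zero]
          rw [Finset.mul_sum,
            ← Finset.sum_range_reflect (fun j => M * B * (n.factorial : ℝ) * r ^ n * K ^ j) n]
          apply Finset.sum_congr rfl
          intro k hk
          have hkn : k < n := Finset.mem_range.mp hk
          rw [if_pos (by omega : n - (k+1) < n),
            show n - (k + 1) = n - 1 - k from by omega]
        have hgeom : ∑ j ∈ Finset.range n, K ^ j = (K ^ n - 1) / (K - 1) :=
          geom_sum_eq hK1.ne' n
        calc ‖PowerSeries.constantCoeff f‖⁻¹ * ‖∑ x ∈ Finset.HasAntidiagonal.antidiagonal n,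
              if x.2 < n then (PowerSeries.coeff x.1) f * (PowerSeries.coeff x.2) f⁻¹ else 0‖
            ≤ B * (M * B * (n.factorial : ℝ) * r ^ n * ((K ^ n - 1) / (K - 1))) := by
              rw [← hBdef]
              apply mul_le_mul_of_nonneg_left _ (le_of_lt hBpos)
              rw [← hgeom, ← hsum2]
              exact hsum1
          _ = B * ((n.factorial : ℝ) * r ^ n * (K ^ n - 1)) := by
              have : K - 1 = M * B := by rw [hKdef]; ring
              rw [this]
              field_simp
          _ ≤ B * s ^ n * (n.factorial : ℝ) := by
              rw [hsdef, mul_pow]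
              have h1 : (K ^ n - 1) ≤ K ^ n := by linarith
              calc B * ((n.factorial : ℝ) * r ^ n * (K ^ n - 1))
                  ≤ B * ((n.factorial : ℝ) * r ^ n * K ^ n) := by
                    apply mul_le_mul_of_nonneg_left _ (le_of_lt hBpos)
                    apply mul_le_mul_of_nonneg_left h1 (by positivity)
                _ = B * (K ^ n * r ^ n) * (n.factorial : ℝ) := by ring
  refine ⟨max B 1, s, le_max_right _ _, hs1, fun j => ?_⟩
  refine (key j).trans ?_
  apply mul_le_mul_of_nonneg_right _ (by positivity)
  apply mul_le_mul_of_nonneg_right (le_max_left _ _) (by positivity)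

lemma Gev_X : Gev (PowerSeries.X : PowerSeries ℂ) := by
  refine ⟨1, 1, le_rfl, le_rfl, fun j => ?_⟩
  rw [PowerSeries.coeff_X]
  have h1 : (1:ℝ) ≤ (j.factorial : ℝ) := by exact_mod_cast j.factorial_pos
  split_ifs with h
  · simp only [norm_one, one_pow, one_mul]; linarith
  · simp only [norm_zero, one_pow, one_mul]; positivity

lemma Gev_C (c : ℂ) : Gev (PowerSeries.C c) := by
  refine ⟨max ‖c‖ 1, 1, le_max_right _ _, le_rfl, fun j => ?_⟩
  rw [PowerSeries.coeff_C]
  have h1 : (1:ℝ) ≤ (j.factorial : ℝ) := by exact_mod_cast j.factorial_pos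
  have h2 : (0:ℝ) ≤ max ‖c‖ 1 := le_trans zero_le_one (le_max_right _ _)
  split_ifs with h
  · calc ‖c‖ ≤ max ‖c‖ 1 := le_max_left _ _
      _ = max ‖c‖ 1 * 1 := (mul_one _).symm
      _ ≤ max ‖c‖ 1 * (j.factorial : ℝ) := by
          apply mul_le_mul_of_nonneg_left h1 h2
      _ = max ‖c‖ 1 * 1 ^ j * (j.factorial : ℝ) := by rw [one_pow, mul_one]
  · simp only [norm_zero]; positivity


/-- `A = ⋃_{C>0} A_C` (realized as any subring `S` of `ℂ[[t]]` with carrier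
`A`) is a discrete valuation ring: a local integral domain whose maximal ideal
is the principal ideal `t·A = {f ∈ A : f(0) = 0}`, whose residue field is `ℂ`
via the constant coefficient, and in which every nonzero `f` factors uniquely
as `f = tⁿ·u` with `n` the `t`-adic order of `f` and `u` a unit. -/
theorem statement_11 (S : Subring (PowerSeries ℂ))
    (hS : (S : Set (PowerSeries ℂ)) = Afull) :
    IsDomain S ∧
    IsLocalRing S ∧
    IsDiscreteValuationRing S ∧
    (∀ h : IsLocalRing S,
      ((IsLocalRing.maximalIdeal S : Set S) =
        {f : S | PowerSeries.constantCoeff (f : PowerSeries ℂ) = 0}) ∧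
      ((IsLocalRing.maximalIdeal S : Set S) =
        {f : S | ∃ g : S, (f : PowerSeries ℂ) = PowerSeries.X * (g : PowerSeries ℂ)}) ∧
      ∃ e : IsLocalRing.ResidueField S ≃+* ℂ,
        ∀ f : S, e (IsLocalRing.residue S f) =
          PowerSeries.constantCoeff (f : PowerSeries ℂ)) ∧
    (∀ f : S, f ≠ 0 →
      ∃ n : ℕ, ∃ u : S, IsUnit u ∧
        (f : PowerSeries ℂ) = PowerSeries.X ^ n * (u : PowerSeries ℂ) ∧
        PowerSeries.order (f : PowerSeries ℂ) = n ∧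
        (∀ (m : ℕ) (v : S), IsUnit v →
          (f : PowerSeries ℂ) = PowerSeries.X ^ m * (v : PowerSeries ℂ) →
            m = n ∧ v = u)) := by
  classical
  have hmem : ∀ g : PowerSeries ℂ, g ∈ S ↔ Gev g := by
    intro g
    rw [← SetLike.mem_coe, hS]
    exact mem_Afull_iff_Gev g
  have hXmem : (PowerSeries.X : PowerSeries ℂ) ∈ S := (hmem _).mpr Gev_X
  have hCmem : ∀ c : ℂ, (PowerSeries.C c) ∈ S := fun c => (hmem _).mpr (Gev_C c)
  -- units of S are exactly the elements with nonzero constant coefficient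
  have hUnit : ∀ f : S, IsUnit f ↔ PowerSeries.constantCoeff (f : PowerSeries ℂ) ≠ 0 := by
    intro f
    constructor
    · rintro ⟨u, rfl⟩ h
      have h1 : ((u : S) : PowerSeries ℂ) * (((u⁻¹ : Sˣ) : S) : PowerSeries ℂ) = 1 := by
        rw [← Subring.coe_mul, u.mul_inv, OneMemClass.coe_one]
      have h2 := congrArg (PowerSeries.constantCoeff) h1
      rw [map_mul, h, zero_mul, map_one] at h2
      exact one_ne_zero h2.symm
    · intro h
      have hginv : ((f : PowerSeries ℂ))⁻¹ ∈ S := (hmem _).mpr (Gev_inv h ((hmem _).mp f.2))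
      refine IsUnit.of_mul_eq_one (a := f) ⟨_, hginv⟩ ?_
      apply Subtype.ext
      push_cast
      exact PowerSeries.mul_inv_cancel _ h
  haveI hLocal : IsLocalRing S := by
    apply IsLocalRing.of_isUnit_or_isUnit_one_sub_self
    intro a
    by_cases h : PowerSeries.constantCoeff (a : PowerSeries ℂ) = 0
    · right
      rw [hUnit]
      push_cast
      rw [map_sub, map_one, h, sub_zero]
      exact one_ne_zero
    · left
      exact (hUnit a).mpr h
  -- maximal ideal description
  have hmax1 : (IsLocalRing.maximalIdeal S : Set S) =
      {f : S | PowerSeries.constantCoeff (f : PowerSeries ℂ) = 0} := by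
    ext f
    simp only [SetLike.mem_coe, IsLocalRing.mem_maximalIdeal, mem_nonunits_iff, hUnit f,
      not_not, Set.mem_setOf_eq]
  have hmax2 : (IsLocalRing.maximalIdeal S : Set S) =
      {f : S | ∃ g : S, (f : PowerSeries ℂ) = PowerSeries.X * (g : PowerSeries ℂ)} := by
    rw [hmax1]
    ext f
    simp only [Set.mem_setOf_eq]
    constructor
    · intro h0
      have hg : shiftPS (f : PowerSeries ℂ) ∈ S := (hmem _).mpr (Gev_shiftPS ((hmem _).mp f.2))
      refine ⟨⟨_, hg⟩, ?_⟩
      apply PowerSeries.ext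
      intro m
      cases m with
      | zero =>
          simp only [PowerSeries.coeff_zero_eq_constantCoeff, map_mul,
            PowerSeries.constantCoeff_X, zero_mul, h0]
      | succ m =>
          rw [PowerSeries.coeff_succ_X_mul]
          simp [coeff_shiftPS]
    · rintro ⟨g, hg⟩
      rw [hg, map_mul, PowerSeries.constantCoeff_X, zero_mul]
  -- factorization
  have hfact : ∀ f : S, f ≠ 0 →
      ∃ n : ℕ, ∃ u : S, IsUnit u ∧
        (f : PowerSeries ℂ) = PowerSeries.X ^ n * (u : PowerSeries ℂ) ∧
        PowerSeries.order (f : PowerSeries ℂ) = n ∧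
        (∀ (m : ℕ) (v : S), IsUnit v →
          (f : PowerSeries ℂ) = PowerSeries.X ^ m * (v : PowerSeries ℂ) →
            m = n ∧ v = u) := by
    intro f hf
    have hfv : (f : PowerSeries ℂ) ≠ 0 := fun h => hf (Subtype.ext h)
    have hex : ∃ k : ℕ, (PowerSeries.coeff k) (f : PowerSeries ℂ) ≠ 0 := by
      by_contra hc
      push_neg at hc
      exact hfv (PowerSeries.ext fun k => by rw [hc k, map_zero])
    set n := Nat.find hex with hn
    set g := shiftPS^[n] (f : PowerSeries ℂ) with hgdef
    have hgmem : g ∈ S := (hmem _).mpr (Gev_iterate_shiftPS ((hmem _).mp f.2) n)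
    have hgcoeff : ∀ k, (PowerSeries.coeff k) g = (PowerSeries.coeff (k + n)) (f : PowerSeries ℂ) :=
      fun k => coeff_iterate_shiftPS _ n k
    have hg0 : PowerSeries.constantCoeff g ≠ 0 := by
      rw [← PowerSeries.coeff_zero_eq_constantCoeff, hgcoeff 0, zero_add]
      exact Nat.find_spec hex
    have hlow : ∀ i, i < n → (PowerSeries.coeff i) (f : PowerSeries ℂ) = 0 := by
      intro i hi
      by_contra hc
      exact Nat.find_min hex hi hc
    have heq : (f : PowerSeries ℂ) = PowerSeries.X ^ n * g := by
      apply PowerSeries.ext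
      intro m
      rw [PowerSeries.coeff_X_pow_mul']
      split_ifs with h
      · rw [hgcoeff, show m - n + n = m from by omega]
      · exact hlow m (by omega)
    have horder : PowerSeries.order (f : PowerSeries ℂ) = n := by
      rw [PowerSeries.order_eq_nat]
      exact ⟨Nat.find_spec hex, hlow⟩
    refine ⟨n, ⟨g, hgmem⟩, (hUnit _).mpr hg0, heq, horder, ?_⟩
    intro m v hv hveq
    have hv0 : PowerSeries.constantCoeff (v : PowerSeries ℂ) ≠ 0 := (hUnit v).mp hv
    have horder2 : PowerSeries.order (f : PowerSeries ℂ) = m := by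
      rw [PowerSeries.order_eq_nat]
      constructor
      · rw [hveq, PowerSeries.coeff_X_pow_mul', if_pos le_rfl, Nat.sub_self,
          PowerSeries.coeff_zero_eq_constantCoeff]
        exact hv0
      · intro i hi
        rw [hveq, PowerSeries.coeff_X_pow_mul', if_neg (by omega)]
    have hmn : m = n := by
      have := horder2.symm.trans horder
      exact_mod_cast this
    subst hmn
    refine ⟨rfl, ?_⟩
    apply Subtype.ext
    have hXn : (PowerSeries.X : PowerSeries ℂ) ^ n ≠ 0 :=
      pow_ne_zero _ PowerSeries.X_ne_zero
    exact mul_left_cancel₀ hXn (hveq.symm.trans heq)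
  -- DVR
  haveI hDomain : IsDomain S := inferInstance
  have hXS : ((⟨PowerSeries.X, hXmem⟩ : S) : PowerSeries ℂ) = PowerSeries.X := rfl
  have hirr : Irreducible (⟨PowerSeries.X, hXmem⟩ : S) := by
    constructor
    · rw [hUnit]
      simp [hXS]
    · intro a b hab
      by_contra hc
      push_neg at hc
      obtain ⟨ha, hb⟩ := hc
      have ha0 : PowerSeries.constantCoeff (a : PowerSeries ℂ) = 0 := by
        by_contra h; exact ha ((hUnit a).mpr h)
      have hb0 : PowerSeries.constantCoeff (b : PowerSeries ℂ) = 0 := by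
        by_contra h; exact hb ((hUnit b).mpr h)
      have hga : shiftPS (a : PowerSeries ℂ) ∈ S := (hmem _).mpr (Gev_shiftPS ((hmem _).mp a.2))
      have hgb : shiftPS (b : PowerSeries ℂ) ∈ S := (hmem _).mpr (Gev_shiftPS ((hmem _).mp b.2))
      have ha' : (a : PowerSeries ℂ) = PowerSeries.X * shiftPS (a : PowerSeries ℂ) := by
        apply PowerSeries.ext
        intro m
        cases m with
        | zero =>
            simp only [PowerSeries.coeff_zero_eq_constantCoeff, map_mul,
              PowerSeries.constantCoeff_X, zero_mul, ha0]
        | succ m =>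
            rw [PowerSeries.coeff_succ_X_mul]
            simp [coeff_shiftPS]
      have hb' : (b : PowerSeries ℂ) = PowerSeries.X * shiftPS (b : PowerSeries ℂ) := by
        apply PowerSeries.ext
        intro m
        cases m with
        | zero =>
            simp only [PowerSeries.coeff_zero_eq_constantCoeff, map_mul,
              PowerSeries.constantCoeff_X, zero_mul, hb0]
        | succ m =>
            rw [PowerSeries.coeff_succ_X_mul]
            simp [coeff_shiftPS]
      have habv : (PowerSeries.X : PowerSeries ℂ)
          = PowerSeries.X ^ 2 * (shiftPS (a : PowerSeries ℂ) * shiftPS (b : PowerSeries ℂ)) := by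
        have h := congrArg (fun x : S => (x : PowerSeries ℂ)) hab
        push_cast at h
        rw [ha', hb'] at h
        exact h.trans (by ring)
      have h1 := congrArg (PowerSeries.coeff 1) habv
      rw [PowerSeries.coeff_one_X, PowerSeries.coeff_X_pow_mul', if_neg (by omega)] at h1
      exact one_ne_zero h1
  haveI hDVR : IsDiscreteValuationRing S := by
    apply IsDiscreteValuationRing.ofHasUnitMulPowIrreducibleFactorization
    refine ⟨⟨PowerSeries.X, hXmem⟩, hirr, ?_⟩
    intro x hx
    obtain ⟨n, u, hu, heq, -, -⟩ := hfact x hx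
    refine ⟨n, hu.unit, ?_⟩
    apply Subtype.ext
    push_cast
    rw [hu.unit_spec]
    exact heq.symm
  have hres : ∃ e : IsLocalRing.ResidueField S ≃+* ℂ,
      ∀ f : S, e (IsLocalRing.residue S f) =
        PowerSeries.constantCoeff (f : PowerSeries ℂ) := by
    set φ : S →+* ℂ := (PowerSeries.constantCoeff).comp S.subtype with hφdef
    have hφ : ∀ f : S, φ f = PowerSeries.constantCoeff (f : PowerSeries ℂ) := fun f => rfl
    have hsurj : Function.Surjective φ := by
      intro c
      refine ⟨⟨PowerSeries.C c, hCmem c⟩, ?_⟩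
      rw [hφ]
      exact PowerSeries.constantCoeff_C c
    have hker : RingHom.ker φ = IsLocalRing.maximalIdeal S := by
      ext f
      rw [RingHom.mem_ker, hφ]
      have := Set.ext_iff.mp hmax1 f
      simpa using this.symm
    refine ⟨(Ideal.quotEquivOfEq hker.symm).trans (RingHom.quotientKerEquivOfSurjective hsurj),
      fun f => ?_⟩
    erw [RingEquiv.trans_apply]
  exact ⟨hDomain, hLocal, hDVR, fun h => ⟨hmax1, hmax2, hres⟩, hfact⟩
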